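/- arXiv:1902.07493 — 5 statements merged into one kernel-verified Lean document; each statement's English description precedes it below -/
import Mathlib

section
/- Assume the lattice is elliptic and that there exists a minimally elliptic cycle C, i.e. C ∈ L with C > 0, χ(C) = 0, and C ≤ D for every D ∈ L with D > 0 and χ(D) = 0. Then for every l ∈ L with l > 0 and χ(l) = 0, the support |l| is a connected subset of the dual graph and contains |C|. -/
open scoped BigOperators

/-- A negative definite lattice on the free ℤ-module with basis indexed by `V`,
realized inside the ℚ-vector space `V → ℚ`.  The basis vector `E_v` is `Pi.single v 1`,
the symmetric bilinear form `B` takes integer values on basis vectors, is negative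
definite, and has nonnegative off-diagonal entries. -/
structure LatticeData (V : Type*) [Fintype V] [DecidableEq V] where
  B : (V → ℚ) →ₗ[ℚ] (V → ℚ) →ₗ[ℚ] ℚ
  symm : ∀ x y, B x y = B y x
  int_basis : ∀ u v : V, ∃ n : ℤ, B (Pi.single u 1) (Pi.single v 1) = (n : ℚ)
  negdef : ∀ x : V → ℚ, x ≠ 0 → B x x < 0
  offdiag : ∀ u v : V, u ≠ v → (0 : ℚ) ≤ B (Pi.single u 1) (Pi.single v 1)

variable {V : Type*} [Fintype V] [DecidableEq V]

/-- The basis vector `E_v`. -/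
def Ev (v : V) : V → ℚ := Pi.single v 1

/-- `x` lies in the lattice `L` (has integral coefficients). -/
def inL (x : V → ℚ) : Prop := ∀ v, ∃ n : ℤ, x v = (n : ℚ)

/-- The support `|x|` of a cycle. -/
def supp (x : V → ℚ) : Set V := {v | x v ≠ 0}

/-- `x ∈ L'`, the dual lattice: all pairings with basis vectors are integers. -/
def inLd (D : LatticeData V) (x : V → ℚ) : Prop := ∀ v, ∃ n : ℤ, D.B x (Ev v) = (n : ℚ)

/-- `x ∈ S'`: the antinef cone of the dual lattice. -/
def inS' (D : LatticeData V) (x : V → ℚ) : Prop := inLd D x ∧ ∀ v, D.B x (Ev v) ≤ 0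

/-- The Riemann–Roch expression `χ(x) = -(x, x - Z_K)/2`. -/
def chi (D : LatticeData V) (ZK x : V → ℚ) : ℚ := -(D.B x (x - ZK)) / 2

/-- `ZK` is the (anti)canonical cycle: `(Z_K, E_v) = (E_v,E_v) + 2` for all `v`. -/
def IsCanonical (D : LatticeData V) (ZK : V → ℚ) : Prop :=
  ∀ v, D.B ZK (Ev v) = D.B (Ev v) (Ev v) + 2

/-- The lattice is minimal: all self-intersections are at most `-2`. -/
def IsMinimal (D : LatticeData V) : Prop := ∀ v : V, D.B (Ev v) (Ev v) ≤ -2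

/-- The lattice is elliptic: `χ(l) ≥ 0` for all `l ∈ L`, `l > 0`, with value 0 attained. -/
def Elliptic (D : LatticeData V) (ZK : V → ℚ) : Prop :=
  (∀ l : V → ℚ, inL l → 0 ≤ l → l ≠ 0 → 0 ≤ chi D ZK l) ∧
  (∃ l : V → ℚ, inL l ∧ 0 ≤ l ∧ l ≠ 0 ∧ chi D ZK l = 0)

/-- The dual graph: `u ≠ v` are adjacent iff `(E_u, E_v) > 0`. -/
def dualGraph (D : LatticeData V) : SimpleGraph V where
  Adj u v := u ≠ v ∧ 0 < D.B (Ev u) (Ev v)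
  symm := by
    constructor
    intro u v h
    exact ⟨h.1.symm, by rw [D.symm]; exact h.2⟩
  loopless := by
    constructor
    intro u h
    exact h.1 rfl

theorem test_preamble : True := trivial


lemma B_expand {V : Type*} [Fintype V] [DecidableEq V] (D : LatticeData V) (x y : V → ℚ) :
    D.B x y = ∑ u, ∑ v, x u * y v * D.B (Ev u) (Ev v) := by
  have hx : x = ∑ u, x u • Ev u := by
    funext j
    simp [Ev, Pi.single_apply, Finset.sum_apply]
  have hy : y = ∑ v, y v • Ev v := by
    funext j
    simp [Ev, Pi.single_apply, Finset.sum_apply]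
  conv_lhs => rw [hx, hy]
  simp only [map_sum, map_smul, LinearMap.coe_sum, Finset.sum_apply,
    LinearMap.smul_apply, smul_eq_mul, Finset.mul_sum]
  rw [Finset.sum_comm]
  apply Finset.sum_congr rfl
  intro u _
  apply Finset.sum_congr rfl
  intro v _
  ring

lemma chi_add {V : Type*} [Fintype V] [DecidableEq V] (D : LatticeData V) (ZK x y : V → ℚ) :
    chi D ZK (x + y) = chi D ZK x + chi D ZK y - D.B x y := by
  have h1 : D.B (x + y) (x + y - ZK)
      = D.B x (x - ZK) + D.B y (y - ZK) + 2 * D.B x y := by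
    simp only [map_add, map_sub, LinearMap.add_apply, LinearMap.sub_apply]
    linear_combination D.symm y x
  simp only [chi, h1]
  ring

/-- in an elliptic lattice admitting a minimally elliptic cycle `C`,
every `l ∈ L` with `l > 0` and `χ(l) = 0` has connected support (in the dual graph)
containing `|C|`. -/
theorem statement1 {V : Type*} [Fintype V] [DecidableEq V] [Nonempty V]
    (D : LatticeData V) (ZK : V → ℚ) (hZK : IsCanonical D ZK)
    (hell : Elliptic D ZK)
    (C : V → ℚ) (hCL : inL C) (hC0 : 0 ≤ C) (hCne : C ≠ 0) (hCchi : chi D ZK C = 0)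
    (hCmin : ∀ x : V → ℚ, inL x → 0 ≤ x → x ≠ 0 → chi D ZK x = 0 → C ≤ x) :
    ∀ l : V → ℚ, inL l → 0 ≤ l → l ≠ 0 → chi D ZK l = 0 →
      ((dualGraph D).induce (supp l)).Connected ∧ supp C ⊆ supp l := by
  intro l hlL hl0 hlne hlchi
  classical
  have hCl : C ≤ l := hCmin l hlL hl0 hlne hlchi
  have hsub : supp C ⊆ supp l := by
    intro v hv
    have h1 : 0 < C v := lt_of_le_of_ne (hC0 v) (Ne.symm hv)
    exact (lt_of_lt_of_le h1 (hCl v)).ne'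
  obtain ⟨v₀, hv₀⟩ : ∃ v, l v ≠ 0 := Function.ne_iff.mp hlne
  have hv₀s : v₀ ∈ supp l := hv₀
  set G' := (dualGraph D).induce (supp l) with hG'
  haveI : Nonempty ↥(supp l) := ⟨⟨v₀, hv₀s⟩⟩
  have hreach : ∀ b : ↥(supp l), G'.Reachable ⟨v₀, hv₀s⟩ b := by
    by_contra hcon
    push_neg at hcon
    obtain ⟨b, hb⟩ := hcon
    set A : Set V := {v | ∃ h : v ∈ supp l, G'.Reachable ⟨v₀, hv₀s⟩ ⟨v, h⟩} with hA
    set l₁ : V → ℚ := fun v => if v ∈ A then l v else 0 with hl₁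
    set l₂ : V → ℚ := fun v => if v ∈ A then 0 else l v with hl₂
    have hsum : l₁ + l₂ = l := by
      funext v
      simp only [hl₁, hl₂, Pi.add_apply]
      split <;> ring
    have hv₀A : v₀ ∈ A := ⟨hv₀s, SimpleGraph.Reachable.refl _⟩
    have hbA : (b : V) ∉ A := by
      rintro ⟨h, hr⟩
      exact hb hr
    have hl₁L : inL l₁ := by
      intro v
      simp only [hl₁]
      split
      · exact hlL v
      · exact ⟨0, by norm_num⟩
    have hl₂L : inL l₂ := by
      intro v
      simp only [hl₂]
      split
      · exact ⟨0, by norm_num⟩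
      · exact hlL v
    have hl₁0 : 0 ≤ l₁ := by
      intro v
      simp only [hl₁]
      split
      · exact hl0 v
      · exact le_refl 0
    have hl₂0 : 0 ≤ l₂ := by
      intro v
      simp only [hl₂]
      split
      · exact le_refl 0
      · exact hl0 v
    have hl₁ne : l₁ ≠ 0 := by
      intro h
      apply hv₀
      have := congrFun h v₀
      simpa [hl₁, hv₀A] using this
    have hl₂ne : l₂ ≠ 0 := by
      intro h
      apply b.2
      have := congrFun h (b : V)
      simpa [hl₂, hbA] using this
    have hB0 : D.B l₁ l₂ = 0 := by
      rw [B_expand]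
      apply Finset.sum_eq_zero
      intro u _
      apply Finset.sum_eq_zero
      intro v _
      by_cases hu : l₁ u = 0
      · rw [hu]; ring
      · by_cases hv : l₂ v = 0
        · rw [hv]; ring
        · have huA : u ∈ A := by
            by_contra h
            exact hu (by simp [hl₁, h])
          have hvA : v ∉ A := by
            intro h
            exact hv (by simp [hl₂, h])
          have hlu : l u ≠ 0 := by
            intro h
            exact hu (by simp [hl₁, h])
          have hlv : l v ≠ 0 := by
            intro h
            exact hv (by simp [hl₂, h])
          have huv : u ≠ v := fun h => hvA (h ▸ huA)
          have hle : D.B (Ev u) (Ev v) ≤ 0 := by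
            by_contra h
            push_neg at h
            have hadj : (dualGraph D).Adj u v := ⟨huv, h⟩
            have hadj' : G'.Adj ⟨u, hlu⟩ ⟨v, hlv⟩ := hadj
            obtain ⟨hu', hr⟩ := huA
            have : G'.Reachable ⟨v₀, hv₀s⟩ ⟨v, hlv⟩ :=
              SimpleGraph.Reachable.trans hr hadj'.reachable
            exact hvA ⟨hlv, this⟩
          have hge : (0:ℚ) ≤ D.B (Ev u) (Ev v) := D.offdiag u v huv
          have : D.B (Ev u) (Ev v) = 0 := le_antisymm hle hge
          rw [this]; ring
    have hchisum : chi D ZK l₁ + chi D ZK l₂ = 0 := by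
      have := chi_add D ZK l₁ l₂
      rw [hsum, hlchi, hB0] at this
      linarith
    have h1 : 0 ≤ chi D ZK l₁ := hell.1 l₁ hl₁L hl₁0 hl₁ne
    have h2 : 0 ≤ chi D ZK l₂ := hell.1 l₂ hl₂L hl₂0 hl₂ne
    have hc1 : chi D ZK l₁ = 0 := by linarith
    have hc2 : chi D ZK l₂ = 0 := by linarith
    have hcl1 : C ≤ l₁ := hCmin l₁ hl₁L hl₁0 hl₁ne hc1
    have hcl2 : C ≤ l₂ := hCmin l₂ hl₂L hl₂0 hl₂ne hc2
    obtain ⟨w, hw⟩ : ∃ w, C w ≠ 0 := Function.ne_iff.mp hCne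
    have hCw : 0 < C w := lt_of_le_of_ne (hC0 w) (Ne.symm hw)
    have hwA : w ∈ A := by
      by_contra h
      have : l₁ w = 0 := by simp [hl₁, h]
      have := hcl1 w
      linarith [this, hCw]
    have hl₂w : l₂ w = 0 := by simp [hl₂, hwA]
    have := hcl2 w
    linarith
  refine ⟨⟨fun a c => (hreach a).symm.trans (hreach c)⟩, hsub⟩
end

section
/- Let w ∉ V, V' = V ∪ {w}, and consider a lattice on V' as in the context, in which the new basis vector E_w satisfies (E_w, E_v) = 1 for one fixed vertex v ∈ V and (E_w, E_u) = 0 for every u ∈ V∖{v}. Assume the lattice on V' is elliptic. Then every y ∈ L supported on V with y > 0 and χ(y) = 0 has E_v-coefficient at most 1; in particular, if the E_v-coefficient of such a y is at least 1 then it equals exactly 1. -/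
open scoped BigOperators

variable {V : Type*} [Fintype V] [DecidableEq V]

/-- let `V' = V ∪ {w}` and suppose the new basis vector `E_w` pairs to `1`
with `E_v` (for one fixed `v ≠ w`) and to `0` with all other basis vectors.  If the
lattice on `V'` is elliptic, then every `y ∈ L` supported on `V` (i.e. `y w = 0`) with
`y > 0` and `χ(y) = 0` has `E_v`-coefficient at most `1`; in particular if that
coefficient is at least `1` then it equals `1`. -/
theorem statement2 {V' : Type*} [Fintype V'] [DecidableEq V'] [Nonempty V']
    (D : LatticeData V') (ZK : V' → ℚ) (hZK : IsCanonical D ZK)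
    (w v : V') (hvw : v ≠ w)
    (hwv : D.B (Ev w) (Ev v) = 1)
    (hwu : ∀ u : V', u ≠ v → u ≠ w → D.B (Ev w) (Ev u) = 0)
    (hell : Elliptic D ZK) :
    ∀ y : V' → ℚ, inL y → y w = 0 → 0 ≤ y → y ≠ 0 → chi D ZK y = 0 →
      y v ≤ 1 ∧ (1 ≤ y v → y v = 1) := by
  intro y hyL hyw hy0 hyne hchi
  -- B (Ev w) y = y v
  have hdecomp : y = ∑ u : V', y u • Ev u := by
    funext x
    simp [Ev, Finset.sum_apply, Pi.single_apply]
  have hBey : D.B (Ev w) y = y v := by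
    calc D.B (Ev w) y = D.B (Ev w) (∑ u : V', y u • Ev u) := by rw [← hdecomp]
      _ = ∑ u : V', y u * D.B (Ev w) (Ev u) := by
          simp [map_sum, map_smul, smul_eq_mul]
      _ = y v := by
          rw [Finset.sum_eq_single v]
          · rw [hwv]; ring
          · intro u _ hu
            by_cases hw : u = w
            · subst hw; rw [hyw]; ring
            · rw [hwu u hu hw]; ring
          · simp
  set l : V' → ℚ := y + Ev w with hl
  have hlL : inL l := by
    intro u
    obtain ⟨n, hn⟩ := hyL u
    by_cases hu : u = w
    · exact ⟨n + 1, by subst hu; simp [hl, Ev, hn, Pi.single_apply]⟩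
    · exact ⟨n, by simp [hl, Ev, hn, Pi.single_apply, Ne.symm hu, hu]⟩
  have hl0 : 0 ≤ l := by
    intro u
    have := hy0 u
    have h2 : (0:ℚ) ≤ Ev w u := by
      by_cases hu : u = w <;> simp [Ev, Pi.single_apply, hu]
    simpa [hl] using add_nonneg this h2
  have hlne : l ≠ 0 := by
    intro h
    have : l w = 0 := by rw [h]; rfl
    simp [hl, hyw, Ev, Pi.single_apply] at this
  have hBy : D.B y (y - ZK) = 0 := by
    have : -(D.B y (y - ZK)) / 2 = 0 := hchi
    linarith [this]
  have hBZKw : D.B ZK (Ev w) = D.B (Ev w) (Ev w) + 2 := hZK w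
  have hchil : chi D ZK l = 1 - y v := by
    unfold chi
    have expand : D.B l (l - ZK)
        = D.B y (y - ZK) + D.B y (Ev w) + D.B (Ev w) y + D.B (Ev w) (Ev w)
          - D.B (Ev w) ZK := by
      simp only [hl, map_add, map_sub, LinearMap.add_apply, LinearMap.sub_apply]
      ring
    rw [expand, hBy, hBey, D.symm y (Ev w), hBey, D.symm (Ev w) ZK, hBZKw]
    ring
  have hge : 0 ≤ chi D ZK l := hell.1 l hlL hl0 hlne
  rw [hchil] at hge
  constructor
  · linarith
  · intro h; linarith
end

section
/- Assume the dual graph on V is a finite tree with at least two vertices and that (E_u,E_v) ∈ {0,1} for all u ≠ v (with value 1 exactly for adjacent pairs). Suppose Z_K ∈ L, every E_u-coefficient of Z_K is at least 1, and (Z_K,E_u) = (E_u,E_u)+2 for all u. If the E_v-coefficient of Z_K equals 1 for some vertex v, then v is an end-vertex (it has exactly one neighbour in the dual graph) and the Z_K-coefficient of that neighbour equals 2. -/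
open scoped BigOperators

variable {V : Type*} [Fintype V] [DecidableEq V]

private lemma list_rev_range_map {α : Type*} (f : ℕ → α) (m : ℕ) :
    ((List.range (m+2)).map f).reverse = f (m+1) :: f m :: ((List.range m).map f).reverse := by
  simp [List.range_succ]

private lemma no_nonbacktracking {W : Type*} [Finite W] {G : SimpleGraph W} (hG : G.IsAcyclic)
    (f : ℕ → W) (hadj : ∀ n, G.Adj (f n) (f (n+1))) (hnb : ∀ n, f (n+2) ≠ f n) : False := by
  classical
  let w : ∀ n, G.Walk (f 0) (f n) :=
    fun n => Nat.rec SimpleGraph.Walk.nil (fun n p => p.concat (hadj n)) n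
  have wsucc : ∀ n, w (n+1) = (w n).concat (hadj n) := fun n => rfl
  have hw : ∀ n, (w n).IsPath ∧ (w n).support = (List.range (n+1)).map f := by
    intro n
    induction n with
    | zero =>
      refine ⟨SimpleGraph.Walk.IsPath.nil, ?_⟩
      simp [w, List.range_succ]
    | succ n ih =>
      obtain ⟨hp, hs⟩ := ih
      have hmem : f (n+1) ∉ (w n).support := by
        intro hmem
        rw [hs, List.mem_map] at hmem
        obtain ⟨k, hk, hfk⟩ := hmem
        rw [List.mem_range] at hk
        rcases Nat.lt_succ_iff_lt_or_eq.mp hk with hk | rfl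
        · obtain ⟨m, rfl⟩ : ∃ m, n = m + 1 := ⟨n - 1, by omega⟩
          have hmem2 : f k ∈ (w (m+1)).reverse.support := by
            rw [SimpleGraph.Walk.support_reverse, List.mem_reverse, hs]
            exact List.mem_map_of_mem (List.mem_range.mpr (by omega))
          have hadjnk : G.Adj (f (m+1)) (f k) := hfk ▸ hadj (m+1)
          have hq1 : ((w (m+1)).reverse.takeUntil (f k) hmem2).IsPath :=
            hp.reverse.takeUntil _
          have heq : (w (m+1)).reverse.takeUntil (f k) hmem2
              = (SimpleGraph.Path.singleton hadjnk : G.Walk _ _) :=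
            congrArg Subtype.val (hG.path_unique ⟨_, hq1⟩ (SimpleGraph.Path.singleton hadjnk))
          have hspec := (w (m+1)).reverse.take_spec hmem2
          rw [heq] at hspec
          have hsupp := congrArg SimpleGraph.Walk.support hspec
          rw [SimpleGraph.Walk.support_append, SimpleGraph.Walk.support_reverse, hs,
            list_rev_range_map, SimpleGraph.Path.singleton] at hsupp
          simp only [SimpleGraph.Walk.support_cons, SimpleGraph.Walk.support_nil,
            List.cons_append, List.nil_append, List.cons.injEq] at hsupp
          have : f k = f m := hsupp.2.1
          exact hnb m (hfk.symm.trans this)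
        · exact (hadj k).ne hfk
      refine ⟨?_, ?_⟩
      · rw [wsucc]
        rw [← SimpleGraph.Walk.isPath_reverse_iff, SimpleGraph.Walk.reverse_concat]
        refine ((hp.reverse).cons ?_)
        rw [SimpleGraph.Walk.support_reverse, List.mem_reverse]
        exact hmem
      · rw [wsucc, SimpleGraph.Walk.support_concat, hs]
        simp [List.range_succ]
  have key : ∀ i j : ℕ, i < j → f i = f j → False := by
    intro i j hlt heq
    have h := (hw j).1.support_nodup
    rw [(hw j).2] at h
    have := List.inj_on_of_nodup_map h (List.mem_range.mpr (by omega))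
      (List.mem_range.mpr (by omega)) heq
    omega
  have hinj : Function.Injective f := by
    intro i j hij
    by_contra hne
    rcases lt_or_gt_of_ne hne with h | h
    · exact key i j h hij
    · exact key j i h hij.symm
  haveI := Finite.of_injective f hinj
  exact not_finite ℕ

private lemma nbr_sum {V : Type*} [Fintype V] [DecidableEq V]
    (D : LatticeData V) (ZK : V → ℚ)
    (h01 : ∀ u v : V, u ≠ v → D.B (Ev u) (Ev v) = 0 ∨ D.B (Ev u) (Ev v) = 1)
    (hZK : IsCanonical D ZK)
    (w : V) (hw : ZK w = 1) :
    ∑ u ∈ @Finset.filter _ (fun u => (dualGraph D).Adj w u) (Classical.decPred _)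
      Finset.univ, ZK u = 2 := by
  classical
  have hexp : D.B ZK (Ev w) = ∑ u, ZK u * D.B (Ev u) (Ev w) := by
    have hx : ZK = ∑ u, ZK u • Ev u := by
      funext j
      simp [Ev, Pi.single_apply, Finset.sum_apply]
    conv_lhs => rw [hx]
    simp [map_sum]
  have h1 := hZK w
  rw [hexp] at h1
  rw [← Finset.add_sum_erase Finset.univ (fun u => ZK u * D.B (Ev u) (Ev w))
    (Finset.mem_univ w)] at h1
  rw [hw, one_mul] at h1
  have h2 : ∑ u ∈ Finset.univ.erase w, ZK u * D.B (Ev u) (Ev w) = 2 := by linarith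
  have h3 : ∀ u ∈ Finset.univ.erase w,
      ZK u * D.B (Ev u) (Ev w) = if (dualGraph D).Adj w u then ZK u else 0 := by
    intro u hu
    have hne : u ≠ w := (Finset.mem_erase.mp hu).1
    rcases h01 u w hne with h0 | hone
    · rw [h0, mul_zero, if_neg]
      intro hadj
      have := hadj.2
      rw [D.symm, h0] at this
      exact lt_irrefl _ this
    · rw [hone, mul_one, if_pos ⟨hne.symm, by rw [D.symm (Ev w)]; rw [hone]; norm_num⟩]
  rw [Finset.sum_congr rfl h3] at h2
  have h4 : ∑ u ∈ Finset.univ.filter (fun u => (dualGraph D).Adj w u), ZK u = 2 := by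
    rw [Finset.sum_filter, ← Finset.add_sum_erase Finset.univ _ (Finset.mem_univ w)]
    rw [if_neg (dualGraph D).irrefl, h2, zero_add]
  convert h4 using 2



/-- if the dual graph is a tree with at least two vertices, all off-diagonal
pairings lie in `{0,1}`, `Z_K ∈ L` with all coefficients at least `1` and satisfies the
adjunction relations, then any vertex `v` whose `Z_K`-coefficient equals `1` is an
end-vertex, and the `Z_K`-coefficient of its (unique) neighbour equals `2`. -/
theorem statement3 {V : Type*} [Fintype V] [DecidableEq V] [Nonempty V]
    (D : LatticeData V) (ZK : V → ℚ)
    (htree : (dualGraph D).IsTree)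
    (hcard : 1 < Fintype.card V)
    (h01 : ∀ u v : V, u ≠ v → D.B (Ev u) (Ev v) = 0 ∨ D.B (Ev u) (Ev v) = 1)
    (hZKL : inL ZK) (hZKge : ∀ u : V, 1 ≤ ZK u)
    (hZK : IsCanonical D ZK)
    (v : V) (hv : ZK v = 1) :
    (∃! u : V, (dualGraph D).Adj v u) ∧ (∀ u : V, (dualGraph D).Adj v u → ZK u = 2) := by
    classical
  set G := dualGraph D with hGdef
  have hsum : ∀ w, ZK w = 1 → ∑ u ∈ Finset.univ.filter (fun u => G.Adj w u), ZK u = 2 := by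
    intro w hw
    have h := nbr_sum D ZK h01 hZK w hw
    convert h using 2
  have hstep : ∀ w x : V, ZK w = 1 → G.Adj w x → ZK x = 1 →
      ∃ y, G.Adj w y ∧ y ≠ x ∧ ZK y = 1 := by
    intro w x hw hwx hx
    have hsw := hsum w hw
    have hxN : x ∈ Finset.univ.filter (fun u => G.Adj w u) :=
      Finset.mem_filter.mpr ⟨Finset.mem_univ _, hwx⟩
    have hadd := Finset.add_sum_erase _ ZK hxN
    rw [hx] at hadd
    have h1 : ∑ u ∈ (Finset.univ.filter (fun u => G.Adj w u)).erase x, ZK u = 1 := by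
      linarith
    obtain ⟨y, hy⟩ : ((Finset.univ.filter (fun u => G.Adj w u)).erase x).Nonempty := by
      by_contra hne
      rw [Finset.not_nonempty_iff_eq_empty] at hne
      rw [hne, Finset.sum_empty] at h1
      norm_num at h1
    have hy1 : ZK y ≤ 1 := by
      have := Finset.single_le_sum
        (f := ZK) (fun i _ => by linarith [hZKge i] : ∀ i ∈ _, (0:ℚ) ≤ ZK i) hy
      linarith
    exact ⟨y, (Finset.mem_filter.mp (Finset.mem_of_mem_erase hy)).2,
      (Finset.mem_erase.mp hy).1, le_antisymm hy1 (hZKge y)⟩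
  have hno : ∀ w x : V, ZK w = 1 → G.Adj w x → ZK x = 1 → False := by
    intro w x hw hwx hx
    have hstep' : ∀ p : V × V, (ZK p.1 = 1 ∧ ZK p.2 = 1 ∧ G.Adj p.1 p.2) →
        ∃ y, G.Adj p.2 y ∧ y ≠ p.1 ∧ ZK y = 1 :=
      fun p hp => hstep p.2 p.1 hp.2.1 hp.2.2.symm hp.1
    let next : {p : V × V // ZK p.1 = 1 ∧ ZK p.2 = 1 ∧ G.Adj p.1 p.2} →
        {p : V × V // ZK p.1 = 1 ∧ ZK p.2 = 1 ∧ G.Adj p.1 p.2} := fun p =>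
      ⟨(p.1.2, Classical.choose (hstep' p.1 p.2)),
        p.2.2.1, (Classical.choose_spec (hstep' p.1 p.2)).2.2,
        (Classical.choose_spec (hstep' p.1 p.2)).1⟩
    let g : ℕ → {p : V × V // ZK p.1 = 1 ∧ ZK p.2 = 1 ∧ G.Adj p.1 p.2} :=
      fun n => Nat.rec ⟨(w, x), hw, hx, hwx⟩ (fun _ p => next p) n
    let f : ℕ → V := fun n => (g n).1.1
    have hf1 : ∀ n, f (n+1) = (g n).1.2 := fun n => rfl
    have hadjf : ∀ n, G.Adj (f n) (f (n+1)) := fun n => by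
      rw [hf1]; exact (g n).2.2.2
    have hnbf : ∀ n, f (n+2) ≠ f n := by
      intro n
      have h2 : f (n+2) = Classical.choose (hstep' (g n).1 (g n).2) := rfl
      rw [h2]
      exact (Classical.choose_spec (hstep' (g n).1 (g n).2)).2.1
    exact no_nonbacktracking htree.IsAcyclic f hadjf hnbf
  set N := Finset.univ.filter (fun u => G.Adj v u) with hNdef
  have hsv : ∑ u ∈ N, ZK u = 2 := hsum v hv
  have hNadj : ∀ u, u ∈ N ↔ G.Adj v u := fun u => by simp [hNdef]
  have hNne : N.Nonempty := by
    obtain ⟨u0, hu0⟩ := Fintype.exists_ne_of_one_lt_card hcard v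
    obtain ⟨p⟩ := htree.isConnected.preconnected v u0
    cases p with
    | nil => exact absurd rfl hu0
    | cons h q => exact ⟨_, (hNadj _).mpr h⟩
  have hNcard : N.card ≤ 2 := by
    have hq : (N.card : ℚ) ≤ 2 := by
      calc (N.card : ℚ) = ∑ _u ∈ N, (1:ℚ) := by simp
      _ ≤ ∑ u ∈ N, ZK u := Finset.sum_le_sum (fun u _ => hZKge u)
      _ = 2 := hsv
    exact_mod_cast hq
  have hcases : N.card = 1 ∨ N.card = 2 := by
    have := Finset.card_pos.mpr hNne; omega
  rcases hcases with h1 | h2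
  · obtain ⟨u, hu⟩ := Finset.card_eq_one.mp h1
    have huadj : G.Adj v u := (hNadj u).mp (hu ▸ Finset.mem_singleton_self u)
    have huZK : ZK u = 2 := by
      rw [hu, Finset.sum_singleton] at hsv; exact hsv
    refine ⟨⟨u, huadj, ?_⟩, ?_⟩
    · intro y hy
      have hyN : y ∈ N := (hNadj y).mpr hy
      rw [hu, Finset.mem_singleton] at hyN
      exact hyN
    · intro y hy
      have hyN : y ∈ N := (hNadj y).mpr hy
      rw [hu, Finset.mem_singleton] at hyN
      rw [hyN]; exact huZK
  · obtain ⟨a, b, hab, hN⟩ := Finset.card_eq_two.mp h2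
    have haadj : G.Adj v a := (hNadj a).mp (by rw [hN]; simp)
    have hsum2 : ZK a + ZK b = 2 := by rw [hN, Finset.sum_pair hab] at hsv; exact hsv
    have ha1 : ZK a = 1 := by linarith [hZKge a, hZKge b]
    exact (hno v a hv haadj ha1).elim
end

section
/- Assume the lattice is minimal and Z_K ∉ L, and let s ∈ S' be such that Z_K − s ∈ L and s ≤ t for every t ∈ S' with Z_K − t ∈ L (the minimal antinef representative of the class of Z_K). If Z ∈ L satisfies Z > 0 and (Z, E_v) = (E_v,E_v)+2 for every v ∈ |Z| (its support carries a numerically Gorenstein subgraph with canonical cycle Z), then Z ≤ Z_K − s; in particular |Z| ⊆ |Z_K − s|. -/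
open scoped BigOperators

variable {V : Type*} [Fintype V] [DecidableEq V]

lemma B_apply_sum {V : Type*} [Fintype V] [DecidableEq V] (D : LatticeData V)
    (x : V → ℚ) (v : V) :
    D.B x (Ev v) = ∑ u : V, x u * D.B (Ev u) (Ev v) := by
  have hx : x = ∑ u : V, x u • Ev u := by
    funext w
    simp [Ev, Pi.single_apply, Finset.sum_apply]
  conv_lhs => rw [hx]
  simp [map_sum, LinearMap.sum_apply, map_smul, smul_eq_mul]

lemma int_sum {V : Type*} (s : Finset V) (f : V → ℚ)
    (h : ∀ u ∈ s, ∃ n : ℤ, f u = (n : ℚ)) :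
    ∃ n : ℤ, ∑ u ∈ s, f u = (n : ℚ) := by
  classical
  induction s using Finset.induction with
  | empty => exact ⟨0, by simp⟩
  | @insert a s ha ih =>
      obtain ⟨n, hn⟩ := h a (Finset.mem_insert_self a s)
      obtain ⟨m, hm⟩ := ih (fun u hu => h u (Finset.mem_insert_of_mem hu))
      exact ⟨n + m, by rw [Finset.sum_insert ha, hn, hm]; push_cast; ring⟩

/-- in a minimal lattice with `Z_K ∉ L`, with `s` the minimal antinef
representative of the class of `Z_K`: if `Z ∈ L`, `Z > 0`, and `(Z, E_v) = (E_v,E_v)+2`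
for every `v ∈ |Z|`, then `Z ≤ Z_K - s`; in particular `|Z| ⊆ |Z_K - s|`. -/
theorem statement7 {V : Type*} [Fintype V] [DecidableEq V] [Nonempty V]
    (D : LatticeData V) (ZK : V → ℚ) (hZK : IsCanonical D ZK)
    (hmin : IsMinimal D) (hnotL : ¬ inL ZK)
    (s : V → ℚ) (hsS : inS' D s) (hsL : inL (ZK - s))
    (hsmin : ∀ t : V → ℚ, inS' D t → inL (ZK - t) → s ≤ t)
    (Z : V → ℚ) (hZL : inL Z) (hZ0 : 0 ≤ Z) (hZne : Z ≠ 0)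
    (hcan : ∀ v ∈ supp Z, D.B Z (Ev v) = D.B (Ev v) (Ev v) + 2) :
    Z ≤ ZK - s ∧ supp Z ⊆ supp (ZK - s) := by
  -- Z is integral against every basis vector
  have hZint : ∀ v, ∃ n : ℤ, D.B Z (Ev v) = (n : ℚ) := by
    intro v
    rw [B_apply_sum]
    apply int_sum
    intro u _
    obtain ⟨m, hm⟩ := hZL u
    obtain ⟨k, hk⟩ := D.int_basis u v
    exact ⟨m * k, by rw [hm, show D.B (Ev u) (Ev v) = (k:ℚ) from hk]; push_cast; ring⟩
  -- t := ZK - Z lies in S'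
  have htS' : inS' D (ZK - Z) := by
    constructor
    · intro v
      obtain ⟨n, hn⟩ := D.int_basis v v
      obtain ⟨m, hm⟩ := hZint v
      refine ⟨n + 2 - m, ?_⟩
      have : D.B (ZK - Z) (Ev v) = D.B ZK (Ev v) - D.B Z (Ev v) := by
        simp [map_sub]
      rw [this, hZK v, show D.B (Ev v) (Ev v) = (n:ℚ) from hn, hm]; push_cast; ring
    · intro v
      have hsub : D.B (ZK - Z) (Ev v) = D.B ZK (Ev v) - D.B Z (Ev v) := by
        simp [map_sub]
      by_cases hv : v ∈ supp Z
      · rw [hsub, hZK v, hcan v hv]; ring_nf; simp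
      · have hZv : Z v = 0 := by
          by_contra h; exact hv h
        have hpos : 0 ≤ D.B Z (Ev v) := by
          rw [B_apply_sum]
          apply Finset.sum_nonneg
          intro u _
          by_cases hu : u = v
          · subst hu; rw [hZv]; simp
          · exact mul_nonneg (hZ0 u) (D.offdiag u v hu)
        have : D.B ZK (Ev v) ≤ 0 := by
          rw [hZK v]
          linarith [hmin v]
        rw [hsub]; linarith
  have htL : inL (ZK - (ZK - Z)) := by
    have : ZK - (ZK - Z) = Z := by ring
    rw [this]; exact hZL
  have hst : s ≤ ZK - Z := hsmin (ZK - Z) htS' htL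
  have hle : Z ≤ ZK - s := by
    intro v
    have := hst v
    simp only [Pi.sub_apply] at this ⊢
    linarith
  refine ⟨hle, ?_⟩
  intro v hv
  have h1 : 0 < Z v := lt_of_le_of_ne (hZ0 v) (Ne.symm hv)
  have h2 : Z v ≤ (ZK - s) v := hle v
  exact ne_of_gt (lt_of_lt_of_le h1 h2)
end

section
/- Assume the lattice is minimal. Then every x ∈ L with x ≤ 0 and x ≠ 0 satisfies χ(x) > 0. Consequently, if Z_K ∈ L, then every l ∈ L with l ≥ Z_K and l ≠ Z_K satisfies χ(l) > 0. -/
open scoped BigOperators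

variable {V : Type*} [Fintype V] [DecidableEq V]

lemma B_expand_aux {V : Type*} [Fintype V] [DecidableEq V] (D : LatticeData V)
    (x y : V → ℚ) : D.B x y = ∑ v, x v * D.B (Ev v) y := by
  have hx : x = ∑ v, x v • Ev v := by
    funext w
    simp [Ev, Finset.sum_apply, Pi.single_apply]
  conv_lhs => rw [hx]
  rw [map_sum, LinearMap.sum_apply]
  simp [smul_eq_mul]

/-- in a minimal lattice, every `x ∈ L` with `x ≤ 0`, `x ≠ 0` has
`χ(x) > 0`; consequently, if `Z_K ∈ L` then every `l ∈ L` with `l ≥ Z_K`, `l ≠ Z_K`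
has `χ(l) > 0`. -/
theorem statement8 {V : Type*} [Fintype V] [DecidableEq V] [Nonempty V]
    (D : LatticeData V) (ZK : V → ℚ) (hZK : IsCanonical D ZK)
    (hmin : IsMinimal D) :
    (∀ x : V → ℚ, inL x → x ≤ 0 → x ≠ 0 → 0 < chi D ZK x) ∧
    (inL ZK → ∀ l : V → ℚ, inL l → ZK ≤ l → l ≠ ZK → 0 < chi D ZK l) := by
  have key : ∀ x : V → ℚ, x ≤ 0 → x ≠ 0 → 0 < chi D ZK x := by
    intro x hx0 hxne
    have hBxx : D.B x x < 0 := D.negdef x hxne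
    have hBxZ : 0 ≤ D.B x ZK := by
      rw [B_expand_aux]
      apply Finset.sum_nonneg
      intro v _
      have h1 : D.B (Ev v) ZK ≤ 0 := by
        rw [D.symm, hZK v]
        linarith [hmin v]
      have h2 : x v ≤ 0 := hx0 v
      nlinarith
    unfold chi
    rw [map_sub]
    linarith
  refine ⟨fun x _ hx0 hxne => key x hx0 hxne, ?_⟩
  intro _ l _ hZl hlne
  have hsym : chi D ZK l = chi D ZK (ZK - l) := by
    unfold chi
    have h1 : (ZK - l) - ZK = -l := by ring
    rw [h1, map_sub, map_neg, map_sub, LinearMap.sub_apply, D.symm ZK l]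
    ring
  rw [hsym]
  exact key (ZK - l) (sub_nonpos.mpr hZl) (sub_ne_zero.mpr fun h => hlne h.symm)
end
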